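/- The collection of subsets of Th(T) of the form Z(E), for E a full subcategory of T, forms the closed sets of a topology on Th(T) (the Zariski topology on thick subcategories). -/
import Mathlib


/-!
STATEMENT 3: The subsets Z(E) of Th(T) are the closed sets of a topology (the Zariski topology) on Th(T).
-/

open CategoryTheory CategoryTheory.Limits CategoryTheory.Pretriangulated ZeroObject

/-- A thick subcategory of a (pre)triangulated category, modeled by its class of objects:
closed under isomorphisms, containing the zero object, closed under shifts, extensions
(distinguished triangles) and direct summands. -/
structure ThickSubcategory (C : Type*) [Category C] [HasZeroObject C] [HasShift C ℤ]
    [Preadditive C] [∀ n : ℤ, (CategoryTheory.shiftFunctor C n).Additive]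
    [Pretriangulated C] [HasBinaryBiproducts C] where
  set : Set C
  zero_mem : (0 : C) ∈ set
  isoClosed : ∀ {X Y : C}, (X ≅ Y) → X ∈ set → Y ∈ set
  shift_mem : ∀ (X : C), X ∈ set → ∀ n : ℤ, (X⟦n⟧ : C) ∈ set
  ext_mem : ∀ T ∈ distTriang C, T.obj₁ ∈ set → T.obj₂ ∈ set → T.obj₃ ∈ set
  summand_mem : ∀ (X Y : C), (X ⊞ Y) ∈ set → X ∈ set ∧ Y ∈ set

variable (C : Type*) [Category C] [HasZeroObject C] [HasShift C ℤ]
    [Preadditive C] [∀ n : ℤ, (CategoryTheory.shiftFunctor C n).Additive]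
    [Pretriangulated C] [HasBinaryBiproducts C]

/-- `Z(E)` : the set of thick subcategories whose object class is disjoint from `E`. -/
def Z (E : Set C) : Set (ThickSubcategory C) := {T | T.set ∩ E = ∅}

lemma mem_Z_iff {E : Set C} {T : ThickSubcategory C} :
    T ∈ Z C E ↔ ∀ x ∈ E, x ∉ T.set := by
  simp only [Z, Set.mem_setOf_eq, Set.eq_empty_iff_forall_notMem, Set.mem_inter_iff, not_and]
  tauto

lemma biprod_mem (T : ThickSubcategory C) {X Y : C} (hX : X ∈ T.set) (hY : Y ∈ T.set) :
    (X ⊞ Y) ∈ T.set := by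
  have hdt := inv_rot_of_distTriang _ (binaryBiproductTriangle_distinguished X Y)
  exact T.ext_mem _ hdt (T.shift_mem _ hY (-1)) hX

/-- The sets of the form `Z(E)` form the closed sets of a topology on `Th(T)`. -/
theorem exists_topology_closed_iff_Z :
    ∃ t : TopologicalSpace (ThickSubcategory C),
      ∀ s : Set (ThickSubcategory C), (@IsClosed _ t s) ↔ ∃ E : Set C, s = Z C E := by
  have hempty : (∅ : Set (ThickSubcategory C)) ∈ {s : Set (ThickSubcategory C) | ∃ E : Set C, s = Z C E} := by
    refine ⟨Set.univ, ?_⟩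
    ext T
    simp only [Set.mem_empty_iff_false, mem_Z_iff, Set.mem_univ, forall_true_left, false_iff,
      not_forall, not_not]
    exact ⟨0, T.zero_mem⟩
  have hsInter : ∀ A ⊆ {s : Set (ThickSubcategory C) | ∃ E : Set C, s = Z C E},
      ⋂₀ A ∈ {s : Set (ThickSubcategory C) | ∃ E : Set C, s = Z C E} := by
    intro A hA
    refine ⟨⋃ s : A, (hA s.2).choose, ?_⟩
    ext T
    simp only [Set.mem_sInter, mem_Z_iff, Set.mem_iUnion]
    constructor
    · rintro h x ⟨s, hx⟩
      have hT : T ∈ Z C (hA s.2).choose := by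
        rw [← (hA s.2).choose_spec]; exact h s s.2
      exact (mem_Z_iff C).mp hT x hx
    · intro h s hs
      rw [(hA hs).choose_spec, mem_Z_iff]
      intro x hx
      exact h x ⟨⟨s, hs⟩, hx⟩
  have hunion : ∀ s ∈ {s : Set (ThickSubcategory C) | ∃ E : Set C, s = Z C E},
      ∀ u ∈ {s : Set (ThickSubcategory C) | ∃ E : Set C, s = Z C E},
      s ∪ u ∈ {s : Set (ThickSubcategory C) | ∃ E : Set C, s = Z C E} := by
    rintro s ⟨E, rfl⟩ u ⟨F, rfl⟩
    refine ⟨{W | ∃ X ∈ E, ∃ Y ∈ F, W = (X ⊞ Y : C)}, ?_⟩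
    ext T
    simp only [Set.mem_union, mem_Z_iff]
    constructor
    · rintro (h | h) W ⟨X, hX, Y, hY, rfl⟩ hW
      · exact h X hX (T.summand_mem X Y hW).1
      · exact h Y hY (T.summand_mem X Y hW).2
    · intro h
      by_contra hc
      push_neg at hc
      obtain ⟨⟨X, hX, hXT⟩, ⟨Y, hY, hYT⟩⟩ := hc
      exact h (X ⊞ Y) ⟨X, hX, Y, hY, rfl⟩ (biprod_mem C T hXT hYT)
  letI t : TopologicalSpace (ThickSubcategory C) :=
    TopologicalSpace.ofClosed _ hempty hsInter hunion
  refine ⟨t, fun s => ?_⟩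
  constructor
  · intro hs
    have : sᶜᶜ ∈ {s : Set (ThickSubcategory C) | ∃ E : Set C, s = Z C E} := hs.isOpen_compl
    rwa [compl_compl] at this
  · intro hs
    exact isOpen_compl_iff.mp (by show sᶜᶜ ∈ _; rwa [compl_compl])
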